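/- Let T be a finite nonempty tree. For the Maker–Breaker total domination game, T is an N graph if and only if T is isomorphic to the star K_{1,n} for some n ≥ 2; otherwise T is an S graph. -/
import Mathlib


namespace MBTD

variable {V : Type*} [Fintype V] [DecidableEq V]

/-- `a` is a total dominating set of `G`: every vertex has a neighbour in `a`. -/
def IsTotalDomSet (G : SimpleGraph V) (a : Finset V) : Prop :=
  ∀ v : V, ∃ u ∈ a, G.Adj u v

/-- `WinsAux win n turn a b` describes the generic positional game in which two players
alternately claim previously unclaimed vertices until every vertex is claimed.
Here `a` is the set of vertices claimed so far by the tracked player, `b` the set claimed by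
the opponent, `turn = true` iff the tracked player is the next to move, and `n` is the number
of moves still to be played.  The tracked player wins iff `win` holds of the final position. -/
def WinsAux (win : Finset V → Finset V → Prop) : ℕ → Bool → Finset V → Finset V → Prop
  | 0, _, a, b => win a b
  | n + 1, true, a, b => ∃ v ∈ Finset.univ \ (a ∪ b), WinsAux win n false (insert v a) b
  | n + 1, false, a, b => ∀ v ∈ Finset.univ \ (a ∪ b), WinsAux win n true a (insert v b)

/-- Dominator has a winning strategy in the Maker-Breaker total domination game on `G`,
where `dFirst = true` means Dominator moves first (the D-game) and `dFirst = false` means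
Staller moves first (the S-game).  Dominator wins iff the set of vertices he has claimed at
the end of the game is a total dominating set of `G`. -/
def DominatorWinsMBTD (G : SimpleGraph V) (dFirst : Bool) : Prop :=
  WinsAux (fun a _ => IsTotalDomSet G a) (Fintype.card V) dFirst ∅ ∅

/-- Staller has a winning strategy in the Maker-Breaker total domination game on `G`,
where `dFirst = true` means Dominator moves first (the D-game) and `dFirst = false` means
Staller moves first (the S-game).  Staller wins iff she claims every vertex of the open
neighbourhood of some vertex. -/
def StallerWinsMBTD (G : SimpleGraph V) (dFirst : Bool) : Prop :=
  WinsAux (fun a _ => ∃ v : V, ∀ u : V, G.Adj u v → u ∈ a) (Fintype.card V) (!dFirst) ∅ ∅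

/-- `G` is a `𝒟` graph: Dominator wins both the D-game and the S-game. -/
def IsD (G : SimpleGraph V) : Prop :=
  DominatorWinsMBTD G true ∧ DominatorWinsMBTD G false

/-- `G` is an `𝒮` graph: Staller wins both the D-game and the S-game. -/
def IsS (G : SimpleGraph V) : Prop :=
  StallerWinsMBTD G true ∧ StallerWinsMBTD G false

/-- `G` is an `𝒩` graph: whichever player moves first wins. -/
def IsN (G : SimpleGraph V) : Prop :=
  DominatorWinsMBTD G true ∧ StallerWinsMBTD G false


section GameLemmas

lemma free_insert_left {a b : Finset V} {v : V} (hv : v ∈ Finset.univ \ (a ∪ b)) :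
    (Finset.univ \ (insert v a ∪ b)) = (Finset.univ \ (a ∪ b)).erase v := by
  ext x
  simp only [Finset.mem_sdiff, Finset.mem_univ, true_and, Finset.mem_union, Finset.mem_insert,
    Finset.mem_erase]
  tauto

lemma free_insert_right {a b : Finset V} {v : V} (hv : v ∈ Finset.univ \ (a ∪ b)) :
    (Finset.univ \ (a ∪ insert v b)) = (Finset.univ \ (a ∪ b)).erase v := by
  ext x
  simp only [Finset.mem_sdiff, Finset.mem_univ, true_and, Finset.mem_union, Finset.mem_insert,
    Finset.mem_erase]
  tauto

lemma free_card_insert_left {a b : Finset V} {v : V} {n : ℕ}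
    (hv : v ∈ Finset.univ \ (a ∪ b)) (h : (Finset.univ \ (a ∪ b)).card = n + 1) :
    (Finset.univ \ (insert v a ∪ b)).card = n := by
  rw [free_insert_left hv, Finset.card_erase_of_mem hv, h]; rfl

lemma free_card_insert_right {a b : Finset V} {v : V} {n : ℕ}
    (hv : v ∈ Finset.univ \ (a ∪ b)) (h : (Finset.univ \ (a ∪ b)).card = n + 1) :
    (Finset.univ \ (a ∪ insert v b)).card = n := by
  rw [free_insert_right hv, Finset.card_erase_of_mem hv, h]; rfl

/-- If a monotone goal already holds, the tracked player wins however play continues. -/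
lemma winsAux_of_pred (P : Finset V → Prop) (hP : ∀ (a : Finset V) (v : V), P a → P (insert v a)) :
    ∀ (n : ℕ) (t : Bool) (a b : Finset V), (Finset.univ \ (a ∪ b)).card = n → P a →
      WinsAux (fun a _ => P a) n t a b := by
  intro n
  induction n with
  | zero => intro t a b _ hPa; exact hPa
  | succ n ih =>
    intro t a b hcard hPa
    cases t with
    | true =>
      have hne : (Finset.univ \ (a ∪ b)).Nonempty := by
        rw [← Finset.card_pos, hcard]; omega
      obtain ⟨v, hv⟩ := hne
      exact ⟨v, hv, ih false (insert v a) b (free_card_insert_left hv hcard) (hP a v hPa)⟩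
    | false =>
      intro v hv
      exact ih true a (insert v b) (free_card_insert_right hv hcard) hPa

/-- Playing two winning strategies against each other. -/
lemma winsAux_playoff (w1 w2 : Finset V → Finset V → Prop) :
    ∀ (n : ℕ) (t : Bool) (a b : Finset V), Disjoint a b →
      WinsAux w1 n t a b → WinsAux w2 n (!t) b a →
      ∃ a' b', Disjoint a' b' ∧ w1 a' b' ∧ w2 b' a' := by
  intro n
  induction n with
  | zero => intro t a b hd h1 h2; exact ⟨a, b, hd, h1, h2⟩
  | succ n ih =>
    intro t a b hd h1 h2
    cases t with
    | true =>
      obtain ⟨v, hv, h1'⟩ := h1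
      have hv' : v ∈ Finset.univ \ (b ∪ a) := by rwa [Finset.union_comm]
      have h2' : WinsAux w2 n true b (insert v a) := h2 v hv'
      have hd' : Disjoint (insert v a) b := by
        rw [Finset.disjoint_insert_left]
        refine ⟨?_, hd⟩
        simp only [Finset.mem_sdiff, Finset.mem_union] at hv
        tauto
      exact ih false (insert v a) b hd' h1' (by simpa using h2')
    | false =>
      obtain ⟨v, hv, h2'⟩ : ∃ v ∈ Finset.univ \ (b ∪ a), WinsAux w2 n false (insert v b) a := h2
      have hv' : v ∈ Finset.univ \ (a ∪ b) := by rwa [Finset.union_comm]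
      have h1' : WinsAux w1 n true a (insert v b) := h1 v hv'
      have hd' : Disjoint a (insert v b) := by
        rw [Finset.disjoint_insert_right]
        refine ⟨?_, hd⟩
        simp only [Finset.mem_sdiff, Finset.mem_union] at hv
        tauto
      exact ih true a (insert v b) hd' h1' (by simpa using h2')


end GameLemmas

section Tree

open SimpleGraph

variable {T : SimpleGraph V}

open SimpleGraph

/-- In a tree every path between two vertices has length equal to the distance. -/
lemma tree_path_length (hT : T.IsTree) {u v : V} {p : T.Walk u v} (hp : p.IsPath) :
    p.length = T.dist u v := by
  obtain ⟨q, hq⟩ := hT.isConnected.exists_walk_length_eq_dist u v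
  have hqb : q.bypass.IsPath := q.bypass_isPath
  have h1 : p = q.bypass := by
    obtain ⟨r, _, hr⟩ := hT.existsUnique_path u v
    rw [hr p hp, hr q.bypass hqb]
  have h2 : q.bypass.length ≤ q.length := q.length_bypass_le
  have h3 := T.dist_le p
  rw [h1] at h3 ⊢
  omega

/-- A vertex in the support of a path is at distance at most the length from the start. -/
lemma dist_le_of_mem_support (hT : T.IsTree) {u v w : V} (p : T.Walk u v)
    (h : w ∈ p.support) : T.dist u w ≤ p.length := by
  have := T.dist_le (p.takeUntil w h)
  have := p.length_takeUntil_le h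
  omega

lemma neighbor_dist_eq (hT : T.IsTree) {c x y : V} (hadj : T.Adj x y)
    (hmax : ∀ w, T.dist c w ≤ T.dist c x) : T.dist c y + 1 = T.dist c x ∨ T.dist c y = T.dist c x := by
  have h1 : T.dist c x ≤ T.dist c y + 1 := by
    have := hT.isConnected.dist_triangle (u := c) (v := y) (w := x)
    have : T.dist y x = 1 := by rw [dist_eq_one_iff_adj]; exact hadj.symm
    omega
  have h2 := hmax y
  omega

/-- In a tree, if `y ~ x` and `dist c y + 1 = dist c x` and `x ∉` a geodesic to `y` context...
Key lemma: any neighbour of a farthest vertex sits at distance one less, and is unique. -/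
lemma neighbor_dist (hT : T.IsTree) {c x : V}
    (hmax : ∀ w, T.dist c w ≤ T.dist c x) :
    ∀ u : V, T.Adj u x → T.dist c u + 1 = T.dist c x := by
    intro u hu
    rcases neighbor_dist_eq hT hu.symm hmax with h | h
    · exact h
    · -- distance equal: build a path of length dist c x + 1 from c to x, contradiction
      exfalso
      have hur : T.Reachable c u := hT.isConnected c u
      obtain ⟨r0, hr0⟩ := hur.exists_walk_length_eq_dist
      set r := r0.bypass with hrdef
      have hrp : r.IsPath := r0.bypass_isPath
      have hrlen : r.length = T.dist c u := tree_path_length hT hrp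
      have hxr : x ∉ r.support := by
        intro hmem
        have h3 := dist_le_of_mem_support hT r hmem
        -- dist c x ≤ r.length = dist c u = dist c x, fine... need strict.
        -- x ≠ u (adjacency irrefl), so takeUntil is strictly shorter
        have hxu : x ≠ u := fun he => T.irrefl (he ▸ hu)
        have htp : (r.takeUntil x hmem).IsPath := hrp.takeUntil hmem
        have hlen1 : (r.takeUntil x hmem).length = T.dist c x := tree_path_length hT htp
        have hdp : (r.dropUntil x hmem).IsPath := hrp.dropUntil hmem
        have hdlen : (r.dropUntil x hmem).length = T.dist x u := tree_path_length hT hdp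
        have hsplit : (r.takeUntil x hmem).length + (r.dropUntil x hmem).length = r.length := by
          rw [← Walk.length_append, r.take_spec hmem]
        have hxu' : 0 < T.dist x u := hT.isConnected.pos_dist_of_ne hxu
        omega
      -- extend r by the edge u → x
      have hrx : (r.concat hu).IsPath := by
        rw [← Walk.isPath_reverse_iff, Walk.reverse_concat]
        refine Walk.IsPath.cons hrp.reverse ?_
        rwa [Walk.support_reverse, List.mem_reverse]
      have := tree_path_length hT hrx
      rw [Walk.length_concat] at this
      omega

lemma neighbor_unique (hT : T.IsTree) {c x : V}
    (hmax : ∀ w, T.dist c w ≤ T.dist c x) {u₁ u₂ : V}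
    (h1 : T.Adj u₁ x) (h2 : T.Adj u₂ x) : u₁ = u₂ := by
  have key := neighbor_dist hT hmax
  -- now both neighbours have geodesics; extend both to x; unique path forces equality
  have k1 := key u₁ h1
  have k2 := key u₂ h2
  obtain ⟨r1', hr1'⟩ := (hT.isConnected c u₁).exists_walk_length_eq_dist
  obtain ⟨r2', hr2'⟩ := (hT.isConnected c u₂).exists_walk_length_eq_dist
  set r1 := r1'.bypass
  set r2 := r2'.bypass
  have hp1 : r1.IsPath := r1'.bypass_isPath
  have hp2 : r2.IsPath := r2'.bypass_isPath
  have hl1 : r1.length = T.dist c u₁ := tree_path_length hT hp1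
  have hl2 : r2.length = T.dist c u₂ := tree_path_length hT hp2
  have hx1 : x ∉ r1.support := by
    intro hmem
    have := dist_le_of_mem_support hT r1 hmem
    have := hmax u₁
    omega
  have hx2 : x ∉ r2.support := by
    intro hmem
    have := dist_le_of_mem_support hT r2 hmem
    have := hmax u₂
    omega
  have hq1 : (r1.concat h1).IsPath := by
    rw [← Walk.isPath_reverse_iff, Walk.reverse_concat]
    refine Walk.IsPath.cons hp1.reverse ?_
    rwa [Walk.support_reverse, List.mem_reverse]
  have hq2 : (r2.concat h2).IsPath := by
    rw [← Walk.isPath_reverse_iff, Walk.reverse_concat]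
    refine Walk.IsPath.cons hp2.reverse ?_
    rwa [Walk.support_reverse, List.mem_reverse]
  have heq : r1.concat h1 = r2.concat h2 := by
    obtain ⟨r, _, hr⟩ := hT.existsUnique_path c x
    rw [hr _ hq1, hr _ hq2]
  -- compare the second elements of the reversed supports
  have hs : (r1.concat h1).support.reverse = (r2.concat h2).support.reverse := by rw [heq]
  rw [Walk.support_concat, Walk.support_concat] at hs
  simp only [List.concat_eq_append, List.reverse_append, List.reverse_cons, List.reverse_nil,
    List.nil_append, List.cons_append] at hs
  have e1 : r1.support.reverse = u₁ :: r1.reverse.support.tail := by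
    rw [← Walk.support_reverse]
    exact (Walk.support_eq_cons _)
  have e2 : r2.support.reverse = u₂ :: r2.reverse.support.tail := by
    rw [← Walk.support_reverse]
    exact (Walk.support_eq_cons _)
  rw [e1, e2] at hs
  exact (List.cons.injEq _ _ _ _).mp ((List.cons.injEq _ _ _ _).mp hs).2 |>.1


lemma exists_neighbor (hT : T.IsTree) [Fintype V] (h2 : 1 < Fintype.card V) (v : V) :
    ∃ u, T.Adj u v := by
  obtain ⟨w, hw⟩ := Fintype.exists_ne_of_one_lt_card h2 v
  obtain ⟨p⟩ := hT.isConnected v w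
  cases p with
  | nil => exact absurd rfl hw.symm
  | cons h q => exact ⟨_, h.symm⟩

/-- There is a leaf maximizing the distance from `c`. -/
lemma leaf_far (hT : T.IsTree) [Fintype V] (h2 : 1 < Fintype.card V) (c : V) :
    ∃ x s : V, x ≠ c ∧ (∀ w, T.dist c w ≤ T.dist c x) ∧ T.Adj s x ∧
      (∀ u, T.Adj u x → u = s) ∧ T.dist c s + 1 = T.dist c x := by
  have : Nonempty V := ⟨c⟩
  obtain ⟨x, -, hmax⟩ := Finset.exists_max_image Finset.univ (T.dist c) ⟨c, Finset.mem_univ c⟩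
  have hmax : ∀ w, T.dist c w ≤ T.dist c x := fun w => hmax w (Finset.mem_univ w)
  obtain ⟨w, hw⟩ := Fintype.exists_ne_of_one_lt_card h2 c
  have hwpos : 0 < T.dist c w := hT.isConnected.pos_dist_of_ne (Ne.symm hw)
  have hxpos : 0 < T.dist c x := lt_of_lt_of_le hwpos (hmax w)
  have hxc : x ≠ c := by
    intro he; rw [he] at hxpos; simp [SimpleGraph.dist_self] at hxpos
  obtain ⟨s, hs⟩ := exists_neighbor hT h2 x
  exact ⟨x, s, hxc, hmax, hs, fun u hu => neighbor_unique hT hmax hu hs,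
    neighbor_dist hT hmax s hs⟩

lemma no_triangle (hT : T.IsTree) {c u v : V} (hcu : T.Adj c u) (huv : T.Adj u v)
    (hvc : T.Adj v c) : False := by
  have hcycle : (Walk.cons hcu (Walk.cons huv (Walk.cons hvc Walk.nil))).IsCycle := by
    rw [Walk.cons_isCycle_iff]
    constructor
    · rw [Walk.isPath_def]
      simp [huv.ne, hvc.ne, (hcu.symm.ne : u ≠ c)]
    · intro hmem
      simp only [Walk.edges_cons, Walk.edges_nil, List.mem_cons, List.not_mem_nil, or_false,
        Sym2.eq_iff] at hmem
      rcases hmem with (⟨e1, e2⟩ | ⟨e1, e2⟩) | (⟨e1, e2⟩ | ⟨e1, e2⟩)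
      · exact huv.ne e2
      · exact hvc.ne' e1
      · exact hcu.ne' e2
      · exact huv.ne e2
  exact hT.IsAcyclic _ hcycle

/-- The key structure theorem for trees. -/
lemma trichotomy (hT : T.IsTree) [Fintype V] :
    Fintype.card V = 1 ∨
    (∃ s t : V, s ≠ t ∧ (∃ v, ∀ u, T.Adj u v → u = s) ∧ (∃ v, ∀ u, T.Adj u v → u = t)) ∨
    (∃ c : V, 3 ≤ Fintype.card V ∧ (∀ v, v ≠ c → T.Adj c v) ∧
      (∀ u v, T.Adj u v → u = c ∨ v = c)) := by
  have hne : Nonempty V := hT.isConnected.nonempty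
  by_cases h1 : Fintype.card V = 1
  · exact Or.inl h1
  have h2 : 1 < Fintype.card V := by
    have := Fintype.card_pos (α := V); omega
  obtain ⟨x1, s1, -, -, -, hleaf1, -⟩ := leaf_far hT h2 (Classical.arbitrary V)
  by_cases hB : ∃ t, t ≠ s1 ∧ ∃ v, ∀ u, T.Adj u v → u = t
  · obtain ⟨t, hts, ht⟩ := hB
    exact Or.inr (Or.inl ⟨s1, t, Ne.symm hts, ⟨x1, hleaf1⟩, ht⟩)
  -- all "support" vertices equal s1 =: c
  set c := s1 with hc
  have hsupp : ∀ t : V, (∃ v, ∀ u, T.Adj u v → u = t) → t = c := by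
    intro t ht
    by_contra hne'
    exact hB ⟨t, hne', ht⟩
  -- every vertex is within distance 1 of c
  obtain ⟨x, s, hxc, hmax, hs, hsleaf, hdist⟩ := leaf_far hT h2 c
  have hsc : s = c := hsupp s ⟨x, hsleaf⟩
  rw [hsc, SimpleGraph.dist_self] at hdist
  have hd1 : ∀ w, T.dist c w ≤ 1 := fun w => le_trans (hmax w) (le_of_eq hdist.symm)
  have hadj : ∀ v, v ≠ c → T.Adj c v := by
    intro v hv
    have hp : 0 < T.dist c v := hT.isConnected.pos_dist_of_ne (Ne.symm hv)
    have : T.dist c v = 1 := le_antisymm (hd1 v) hp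
    exact SimpleGraph.dist_eq_one_iff_adj.mp this
  have hno : ∀ u v, T.Adj u v → u = c ∨ v = c := by
    intro u v huv
    by_contra hcon
    push_neg at hcon
    exact no_triangle hT (hadj u hcon.1) huv ((hadj v hcon.2).symm)
  refine Or.inr (Or.inr ⟨c, ?_, hadj, hno⟩)
  -- card ≥ 3
  by_contra hlt
  push_neg at hlt
  have hcard2 : Fintype.card V = 2 := by omega
  obtain ⟨a, b, hab, huniv⟩ := Finset.card_eq_two.mp
    (by rw [Finset.card_univ]; exact hcard2 : (Finset.univ : Finset V).card = 2)
  have hall : ∀ y : V, y = a ∨ y = b := by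
    intro y
    have : y ∈ (Finset.univ : Finset V) := Finset.mem_univ y
    rw [huniv] at this
    simpa using this
  -- the vertex other than c is also a support vertex
  obtain ⟨o, hoc⟩ : ∃ o : V, o ≠ c := by
    rcases hall c with h | h
    · exact ⟨b, by rw [h]; exact hab.symm⟩
    · exact ⟨a, by rw [h]; exact hab⟩
  have hflip : ∀ y : V, y ≠ c → y = o := by
    intro y hy
    rcases hall y with h | h <;> rcases hall o with h' | h' <;> rcases hall c with h'' | h'' <;>
      first
        | exact h.trans h'.symm
        | exact absurd (h.trans h''.symm) hy
        | exact absurd (h'.trans h''.symm) hoc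
  exact hoc (hsupp o ⟨c, fun u hu => hflip u hu.ne⟩)


end Tree

section Strategies

open SimpleGraph

variable {T : SimpleGraph V}

lemma card_free (s : Finset V) : (Finset.univ \ s).card = Fintype.card V - s.card := by
  rw [Finset.card_sdiff_of_subset (Finset.subset_univ s), Finset.card_univ]

lemma tds_mono : ∀ (a : Finset V) (v : V), IsTotalDomSet T a → IsTotalDomSet T (insert v a) := by
  intro a v ha w
  obtain ⟨u, hu, hadj⟩ := ha w
  exact ⟨u, Finset.mem_insert_of_mem hu, hadj⟩

lemma stall_mono : ∀ (a : Finset V) (v : V),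
    (∃ w : V, ∀ u : V, T.Adj u w → u ∈ a) → (∃ w : V, ∀ u : V, T.Adj u w → u ∈ insert v a) := by
  intro a v ⟨w, hw⟩
  exact ⟨w, fun u hu => Finset.mem_insert_of_mem (hw u hu)⟩

lemma dominator_star (hcard : 3 ≤ Fintype.card V) {c : V}
    (hc : ∀ v, v ≠ c → T.Adj c v) : DominatorWinsMBTD T true := by
  unfold DominatorWinsMBTD
  obtain ⟨k, hk⟩ : ∃ k, Fintype.card V = k + 3 := ⟨Fintype.card V - 3, by omega⟩
  rw [hk]
  refine ⟨c, by simp, ?_⟩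
  intro v hv
  have hvc : v ≠ c := by simpa using hv
  have hfree : 0 < (Finset.univ \ (insert c ∅ ∪ insert v ∅) : Finset V).card := by
    rw [card_free]
    have h2 : (insert c ∅ ∪ insert v ∅ : Finset V).card ≤ 2 := by
      apply le_trans (Finset.card_union_le _ _)
      simp
    omega
  obtain ⟨u, hu⟩ := Finset.card_pos.mp hfree
  refine ⟨u, hu, ?_⟩
  have hu' : u ≠ c ∧ u ≠ v := by
    simp only [Finset.mem_sdiff, Finset.mem_univ, true_and, Finset.mem_union, Finset.mem_insert,
      Finset.notMem_empty, or_false, not_or] at hu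
    exact ⟨hu.1, hu.2⟩
  apply winsAux_of_pred _ tds_mono
  · rw [card_free]
    have : (insert u (insert c ∅) ∪ insert v ∅ : Finset V).card = 3 := by
      rw [show (insert u (insert c ∅) ∪ insert v ∅ : Finset V) = {u, c, v} by
        ext x
        simp only [Finset.mem_union, Finset.mem_insert, Finset.mem_singleton, Finset.notMem_empty, or_false]
        tauto]
      rw [Finset.card_insert_of_notMem (by simp [hu'.1, hu'.2]),
        Finset.card_insert_of_notMem (by simp [Ne.symm hvc]), Finset.card_singleton]
    omega
  · intro w
    by_cases hw : w = c
    · exact ⟨u, by simp, hw ▸ (hc u hu'.1).symm⟩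
    · exact ⟨c, by simp, hc w hw⟩

lemma staller_sgame {c : V} (hleaf : ∃ v, ∀ u, T.Adj u v → u = c) :
    StallerWinsMBTD T false := by
  unfold StallerWinsMBTD
  simp only [Bool.not_false]
  have hpos : 0 < Fintype.card V := Fintype.card_pos_iff.mpr ⟨c⟩
  obtain ⟨k, hk⟩ : ∃ k, Fintype.card V = k + 1 := ⟨Fintype.card V - 1, by omega⟩
  rw [hk]
  refine ⟨c, by simp, ?_⟩
  apply winsAux_of_pred _ stall_mono
  · rw [card_free]; simp; omega
  · obtain ⟨v, hv⟩ := hleaf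
    exact ⟨v, fun u hu => by simp [hv u hu]⟩

lemma staller_pair {s t : V} (hst : s ≠ t) (hs : ∃ v, ∀ u, T.Adj u v → u = s)
    (ht : ∃ v, ∀ u, T.Adj u v → u = t) : IsS T := by
  constructor
  · -- D-game, Staller second
    unfold StallerWinsMBTD
    simp only [Bool.not_true]
    have hpos : 1 < Fintype.card V := Fintype.one_lt_card_iff_nontrivial.mpr ⟨⟨s, t, hst⟩⟩
    obtain ⟨k, hk⟩ : ∃ k, Fintype.card V = k + 2 := ⟨Fintype.card V - 2, by omega⟩
    rw [hk]
    intro v hv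
    refine ⟨if v = s then t else s, ?_, ?_⟩
    · simp only [Finset.mem_sdiff, Finset.mem_univ, true_and, Finset.mem_union,
        Finset.notMem_empty, Finset.mem_insert, or_false, false_or]
      split <;> rename_i h
      · subst h; exact fun he => hst he.symm
      · exact fun he => h he.symm
    · apply winsAux_of_pred _ stall_mono
      · rw [card_free]
        have : (insert (if v = s then t else s) ∅ ∪ insert v ∅ : Finset V).card = 2 := by
          rw [Finset.card_union_of_disjoint]
          · simp
          · simp only [Finset.disjoint_insert_left, Finset.mem_insert, Finset.notMem_empty,
              or_false, Finset.disjoint_empty_left, and_true]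
            split <;> rename_i h
            · subst h; exact fun he => hst he.symm
            · exact fun he => h he.symm
        omega
      · split <;> rename_i h
        · obtain ⟨w, hw⟩ := ht
          exact ⟨w, fun u hu => by simp [hw u hu]⟩
        · obtain ⟨w, hw⟩ := hs
          exact ⟨w, fun u hu => by simp [hw u hu]⟩
  · exact staller_sgame hs

lemma staller_singleton (h1 : Fintype.card V = 1) (T : SimpleGraph V) : IsS T := by
  have hsub : Subsingleton V := Fintype.card_le_one_iff_subsingleton.mp (le_of_eq h1)
  have hone : 0 < Fintype.card V := by omega
  obtain ⟨v0⟩ := Fintype.card_pos_iff.mp hone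
  have hP : ∃ v : V, ∀ u : V, T.Adj u v → u ∈ (∅ : Finset V) := by
    refine ⟨v0, fun u hu => ?_⟩
    exact absurd (Subsingleton.elim u v0 ▸ hu) (T.irrefl)
  constructor <;>
    · unfold StallerWinsMBTD
      apply winsAux_of_pred _ stall_mono
      · rw [card_free]; simp
      · exact hP

lemma not_both (hD : DominatorWinsMBTD T true) (hS : StallerWinsMBTD T true) : False := by
  unfold DominatorWinsMBTD at hD
  unfold StallerWinsMBTD at hS
  obtain ⟨a', b', hdisj, htd, v, hv⟩ :=
    winsAux_playoff _ _ (Fintype.card V) true ∅ ∅ (Finset.disjoint_empty_left ∅) hD hS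
  obtain ⟨u, hu, hadj⟩ := htd v
  exact Finset.disjoint_left.mp hdisj hu (hv u hadj)

lemma star_iso (c : V) (hadj : ∀ v, v ≠ c → T.Adj c v)
    (hno : ∀ u v, T.Adj u v → u = c ∨ v = c) {n : ℕ}
    (hn : Fintype.card {v : V // v ≠ c} = n) :
    Nonempty (T ≃g completeBipartiteGraph (Fin 1) (Fin n)) := by
  have e := Fintype.equivFinOfCardEq hn
  refine ⟨⟨Equiv.mk (fun v => if hv : v = c then Sum.inl 0 else Sum.inr (e ⟨v, hv⟩))
      (Sum.elim (fun _ => c) (fun j => (e.symm j).1)) ?_ ?_, ?_⟩⟩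
  · intro v
    by_cases hv : v = c <;> simp [hv]
  · rintro (i | j)
    · simp [Subsingleton.elim (0 : Fin 1) i]
    · have hj : (e.symm j).1 ≠ c := (e.symm j).2
      simp [hj]
  · intro u v
    by_cases hu : u = c <;> by_cases hv : v = c
    · subst hu; subst hv; simp
    · subst hu; simp [hv, hadj v hv]
    · subst hv; simp [hu, (hadj u hu).symm]
    · simp only [Equiv.coe_fn_mk, dif_neg hu, dif_neg hv, completeBipartiteGraph_adj,
        Sum.isLeft_inr, Sum.isRight_inr, Bool.false_eq_true, false_and, and_false, or_self,
        false_iff]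
      intro h
      rcases hno u v h with h' | h'
      · exact hu h'
      · exact hv h'

lemma card_subtype_ne (c : V) : Fintype.card {v : V // v ≠ c} = Fintype.card V - 1 := by
  have := Fintype.card_subtype_compl (p := fun v : V => v = c)
  simpa [Fintype.card_subtype_eq] using this

lemma of_iso {n : ℕ} (hn : 2 ≤ n) (e : T ≃g completeBipartiteGraph (Fin 1) (Fin n)) :
    ∃ c : V, 3 ≤ Fintype.card V ∧ (∀ v, v ≠ c → T.Adj c v) ∧
      (∃ v, ∀ u, T.Adj u v → u = c) := by
  have hcard : Fintype.card V = 1 + n := by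
    rw [Fintype.card_congr e.toEquiv]
    simp
  set c := e.symm (Sum.inl 0) with hc
  refine ⟨c, by omega, ?_, ?_⟩
  · intro v hv
    rcases he : e v with i | j
    · exfalso
      apply hv
      rw [hc, Subsingleton.elim (0 : Fin 1) i, ← he, RelIso.symm_apply_apply]
    · rw [← e.map_adj_iff]
      rw [he, hc, RelIso.apply_symm_apply]
      simp
  · refine ⟨e.symm (Sum.inr ⟨0, by omega⟩), fun u hu => ?_⟩
    rw [← e.map_adj_iff, RelIso.apply_symm_apply] at hu
    rcases he : e u with i | j
    · rw [hc, Subsingleton.elim (0 : Fin 1) i, ← he, RelIso.symm_apply_apply]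
    · rw [he] at hu
      simp at hu

lemma isS_of_not_star {T : SimpleGraph V} (hT : T.IsTree)
    (h : ¬ ∃ n : ℕ, 2 ≤ n ∧ Nonempty (T ≃g completeBipartiteGraph (Fin 1) (Fin n))) :
    IsS T := by
  rcases trichotomy hT with h1 | ⟨s, t, hst, hs, ht⟩ | ⟨c, h3, hadjc, hno⟩
  · exact staller_singleton h1 T
  · exact staller_pair hst hs ht
  · exfalso
    apply h
    exact ⟨Fintype.card V - 1, by omega, star_iso c hadjc hno (card_subtype_ne c)⟩

end Strategies



/-- a finite (nonempty) tree is an `𝒩` graph iff it is a star `K_{1,n}` with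
`n ≥ 2`; otherwise it is an `𝒮` graph. -/
theorem stmt19 {V : Type*} [Fintype V] [DecidableEq V] (T : SimpleGraph V)
    (hT : T.IsTree) :
    (IsN T ↔ ∃ n : ℕ, 2 ≤ n ∧ Nonempty (T ≃g completeBipartiteGraph (Fin 1) (Fin n))) ∧
    ((¬ ∃ n : ℕ, 2 ≤ n ∧ Nonempty (T ≃g completeBipartiteGraph (Fin 1) (Fin n))) → IsS T) := by
  constructor
  · constructor
    · rintro ⟨hD, -⟩
      by_contra hstar
      exact not_both hD (isS_of_not_star hT hstar).1
    · rintro ⟨n, hn2, ⟨e⟩⟩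
      obtain ⟨c, h3, hc, hleaf⟩ := of_iso hn2 e
      exact ⟨dominator_star h3 hc, staller_sgame hleaf⟩
  · exact isS_of_not_star hT

end MBTD
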